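/- Let Q ⊆ L be a radical extension of degree p, where p is an odd prime, and suppose L is Galois over Q. Then L contains a root of unity different from ±1. -/

import Mathlib

/-- A radical Galois extension of odd prime degree contains a root of unity
different from `±1` (so is not quasireal). -/
theorem stmt4 (Q L : Type*) [Field Q] [Field L] [Algebra Q L]
    [FiniteDimensional Q L] (p : ℕ) (hp : p.Prime) (hodd : Odd p)
    (hdeg : Module.finrank Q L = p)
    (hrad : ∃ α : L, (∃ n : ℕ, 0 < n ∧ α ^ n ∈ (algebraMap Q L).range) ∧
      Algebra.adjoin Q {α} = ⊤)
    (hgal : IsGalois Q L) :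
    ∃ ζ : L, (∃ n : ℕ, 0 < n ∧ ζ ^ n = 1) ∧ ζ ≠ 1 ∧ ζ ≠ -1 := by
  obtain ⟨α, ⟨n, hn, c, hc⟩, htop⟩ := hrad
  -- α ≠ 0
  have hα : α ≠ 0 := by
    rintro rfl
    have hbot : (⊥ : Subalgebra Q L) = ⊤ := by
      rw [← htop]
      refine le_antisymm bot_le (Algebra.adjoin_le ?_)
      simp
    have := Subalgebra.bot_eq_top_iff_finrank_eq_one.mp hbot
    rw [hdeg] at this
    exact hp.one_lt.ne' this
  -- key: an automorphism fixing α is the identity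
  have key : ∀ σ : L ≃ₐ[Q] L, σ α = α → σ = 1 := by
    intro σ hσ
    have : σ.toAlgHom = (AlgEquiv.refl : L ≃ₐ[Q] L).toAlgHom :=
      AlgHom.ext_of_adjoin_eq_top htop (by
        rintro x rfl
        simpa using hσ)
    ext x
    exact congrArg (fun f => f x) (congrArg AlgHom.toRingHom this)
  -- there is a nontrivial automorphism
  have hcard : Fintype.card (L ≃ₐ[Q] L) = p := by
    rw [← Nat.card_eq_fintype_card, IsGalois.card_aut_eq_finrank, hdeg]
  have : Nontrivial (L ≃ₐ[Q] L) := by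
    apply Fintype.one_lt_card_iff_nontrivial.mp
    rw [hcard]; exact hp.one_lt
  obtain ⟨σ, hσ1⟩ := exists_ne (1 : L ≃ₐ[Q] L)
  refine ⟨σ α / α, ⟨n, hn, ?_⟩, ?_, ?_⟩
  · have : σ α ^ n = α ^ n := by
      have hcomm := σ.commutes c
      rw [hc, map_pow] at hcomm
      exact hcomm
    rw [div_pow, this, div_self (pow_ne_zero n hα)]
  · intro h
    apply hσ1
    apply key
    field_simp at h
    exact h
  · intro h
    have hσα : σ α = -α := by
      field_simp at h
      linear_combination h
    have hsq : σ ^ 2 = 1 := by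
      apply key
      have : (σ ^ 2) α = σ (σ α) := rfl
      rw [this, hσα, map_neg, hσα, neg_neg]
    have hord : orderOf σ ∣ p := hcard ▸ orderOf_dvd_card
    have hord2 : orderOf σ ∣ 2 := orderOf_dvd_of_pow_eq_one hsq
    rcases (Nat.Prime.eq_one_or_self_of_dvd hp _ hord) with h1 | h1
    · exact hσ1 (orderOf_eq_one_iff.mp h1)
    · have h2 : p ∣ 2 := h1 ▸ hord2
      have := Nat.le_of_dvd two_pos h2
      have := hp.two_le
      have := Nat.odd_iff.mp hodd
      omega
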